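/- Let (b_n)_{n≥1} be a complex sequence with Σ_{n≥1} |b_n|² = 1 and b_1 ≠ 0, and define a_0 = 1 and a_n = Σ_{k=1}^{n} |b_k|² a_{n−k} for n ≥ 1. Then: (i) a_n > 0 for all n and a_{n+k} ≥ a_n · a_k for all n, k ≥ 0; (ii) for every n ≥ 0, the linear operator T_n on ℓ²(N) determined on the standard orthonormal basis (e_k) by T_n e_k = (a_k/a_{n+k})^{1/2} e_{n+k} is bounded, with operator norm exactly a_n^{-1/2}. -/

import Mathlib

open Metric

set_option maxHeartbeats 1000000 in
/-- For the renewal sequence `a_0 = 1`, `a_n = Σ_{k=1}^n |b_k|² a_{n−k}` of a unit-norm `ℓ²`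
sequence `(b_n)_{n≥1}` with `b_1 ≠ 0`: (i) `a_n > 0` and `a_{n+k} ≥ a_n a_k`; (ii) for each
`n` the operator determined on the standard basis of `ℓ²(ℕ)` by
`e_k ↦ (a_k/a_{n+k})^{1/2} e_{n+k}` is bounded with norm exactly `a_n^{-1/2}`. -/
theorem monomial_multiplier_norm (b : ℕ → ℂ) (a : ℕ → ℝ)
    (hb : HasSum (fun n : ℕ => ‖b (n + 1)‖ ^ 2) 1) (hb1 : b 1 ≠ 0)
    (ha0 : a 0 = 1)
    (ha : ∀ n : ℕ, 1 ≤ n → a n = ∑ k ∈ Finset.Icc 1 n, ‖b k‖ ^ 2 * a (n - k)) :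
    (∀ n : ℕ, 0 < a n) ∧
    (∀ n k : ℕ, a n * a k ≤ a (n + k)) ∧
    ∀ n : ℕ, ∃ T : lp (fun _ : ℕ => ℂ) 2 →L[ℂ] lp (fun _ : ℕ => ℂ) 2,
      (∀ k : ℕ, T (lp.single 2 k (1 : ℂ)) =
        (Real.sqrt (a k / a (n + k)) : ℂ) • lp.single 2 (n + k) (1 : ℂ)) ∧
      ‖T‖ = (Real.sqrt (a n))⁻¹ := by
  -- positivity
  have hpos : ∀ n, 0 < a n := by
    intro n
    induction n using Nat.strong_induction_on with
    | _ n ih =>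
      rcases Nat.eq_zero_or_pos n with rfl | hn
      · simpa [ha0] using one_pos
      · rw [ha n hn]
        refine Finset.sum_pos' ?_ ⟨1, Finset.mem_Icc.mpr ⟨le_refl 1, hn⟩, ?_⟩
        · intro k hk
          rw [Finset.mem_Icc] at hk
          exact mul_nonneg (sq_nonneg _) (le_of_lt (ih (n - k) (by omega)))
        · exact mul_pos (pow_pos (norm_pos_iff.mpr hb1) 2) (ih (n - 1) (by omega))
  -- superadditivity
  have hsuper : ∀ n k, a n * a k ≤ a (n + k) := by
    intro n k
    induction k using Nat.strong_induction_on with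
    | _ k ih =>
      rcases Nat.eq_zero_or_pos k with rfl | hk
      · simp [ha0]
      · rw [ha (n + k) (by omega)]
        calc a n * a k = ∑ j ∈ Finset.Icc 1 k, ‖b j‖ ^ 2 * (a n * a (k - j)) := by
              rw [ha k hk, Finset.mul_sum]
              exact Finset.sum_congr rfl fun j _ => by ring
          _ ≤ ∑ j ∈ Finset.Icc 1 k, ‖b j‖ ^ 2 * a (n + k - j) := by
              refine Finset.sum_le_sum fun j hj => ?_
              rw [Finset.mem_Icc] at hj
              have h1 : a n * a (k - j) ≤ a (n + (k - j)) := ih (k - j) (by omega)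
              have h2 : n + (k - j) = n + k - j := by omega
              exact mul_le_mul_of_nonneg_left (h2 ▸ h1) (sq_nonneg _)
          _ ≤ ∑ j ∈ Finset.Icc 1 (n + k), ‖b j‖ ^ 2 * a (n + k - j) := by
              refine Finset.sum_le_sum_of_subset_of_nonneg
                (Finset.Icc_subset_Icc_right (by omega)) fun j _ _ => ?_
              exact mul_nonneg (sq_nonneg _) (hpos _).le
  refine ⟨hpos, hsuper, ?_⟩
  intro n
  set C : ℝ := (Real.sqrt (a n))⁻¹ with hC
  have hCpos : 0 < C := inv_pos.mpr (Real.sqrt_pos.mpr (hpos n))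
  set w : ℕ → ℝ := fun k => Real.sqrt (a k / a (n + k)) with hw
  have hwnn : ∀ k, 0 ≤ w k := fun k => Real.sqrt_nonneg _
  have hw0 : w 0 = C := by
    simp only [hw, hC, ha0, Nat.add_zero]
    rw [one_div, Real.sqrt_inv]
  have hwle : ∀ k, w k ≤ C := by
    intro k
    have h2 : a n * a k ≤ a (n + k) := hsuper n k
    have h1 : a k / a (n + k) ≤ (a n)⁻¹ := by
      rw [div_le_iff₀ (hpos _)]
      have h3 : (a n)⁻¹ * (a n * a k) ≤ (a n)⁻¹ * a (n + k) :=
        mul_le_mul_of_nonneg_left h2 (inv_nonneg.mpr (hpos n).le)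
      rwa [inv_mul_cancel_left₀ (hpos n).ne'] at h3
    calc w k ≤ Real.sqrt (a n)⁻¹ := Real.sqrt_le_sqrt h1
      _ = C := Real.sqrt_inv _
  -- the underlying function
  set g : (ℕ → ℂ) → ℕ → ℂ :=
    fun x m => if h : n ≤ m then (w (m - n) : ℂ) * x (m - n) else 0 with hg
  have hinj : Function.Injective (fun k : ℕ => n + k) := fun i j h => by simpa using h
  have hrange : ∀ (x : ℕ → ℂ) (m : ℕ),
      m ∉ Set.range (fun k : ℕ => n + k) → ‖g x m‖ ^ (2 : ℝ) = 0 := by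
    intro x m hm
    have hnm : ¬ n ≤ m := by
      intro h; exact hm ⟨m - n, by show n + (m - n) = m; omega⟩
    simp [hg, hnm, Real.zero_rpow (by norm_num : (2:ℝ) ≠ 0)]
  have hcomp : ∀ x : ℕ → ℂ,
      (fun m => ‖g x m‖ ^ (2 : ℝ)) ∘ (fun k : ℕ => n + k)
        = fun k => ‖(w k : ℂ) * x k‖ ^ (2 : ℝ) := by
    intro x
    funext k
    simp [hg, Function.comp]
  have hp2 : (0:ℝ) < (2 : ENNReal).toReal := by norm_num
  have hsummand_le : ∀ (x : ℕ → ℂ) (k : ℕ),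
      ‖(w k : ℂ) * x k‖ ^ (2 : ℝ) ≤ C ^ (2 : ℝ) * ‖x k‖ ^ (2 : ℝ) := by
    intro x k
    rw [← Real.mul_rpow hCpos.le (norm_nonneg _)]
    refine Real.rpow_le_rpow (norm_nonneg _) ?_ (by norm_num)
    rw [norm_mul, Complex.norm_real, Real.norm_eq_abs, abs_of_nonneg (hwnn k)]
    exact mul_le_mul_of_nonneg_right (hwle k) (norm_nonneg _)
  have hsum_wx : ∀ x : lp (fun _ : ℕ => ℂ) 2,
      Summable fun k => ‖(w k : ℂ) * (x : ℕ → ℂ) k‖ ^ (2 : ℝ) := by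
    intro x
    have hx : Summable fun k => ‖(x : ℕ → ℂ) k‖ ^ (2 : ℝ) := by
      have := (lp.memℓp x).summable hp2
      simpa using this
    refine Summable.of_nonneg_of_le (fun k => Real.rpow_nonneg (norm_nonneg _) _)
      (hsummand_le x) ?_
    exact (hx.mul_left _).congr fun k => rfl
  have hmem : ∀ x : lp (fun _ : ℕ => ℂ) 2, Memℓp (g x) 2 := by
    intro x
    apply memℓp_gen
    have hsummable : Summable ((fun m => ‖g x m‖ ^ (2 : ℝ)) ∘ (fun k : ℕ => n + k)) := by
      rw [hcomp x]; exact hsum_wx x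
    have := (hinj.summable_iff (hrange x)).mp hsummable
    simpa using this
  have htsum : ∀ x : lp (fun _ : ℕ => ℂ) 2,
      (∑' m, ‖g x m‖ ^ (2 : ℝ)) = ∑' k, ‖(w k : ℂ) * (x : ℕ → ℂ) k‖ ^ (2 : ℝ) := by
    intro x
    rw [← hinj.tsum_eq (f := fun m => ‖g x m‖ ^ (2 : ℝ))]
    · exact tsum_congr fun k => congrFun (hcomp x) k
    · intro m hm
      by_contra hmr
      exact hm (hrange x m hmr)
  have hgadd : ∀ x y : ℕ → ℂ, g (x + y) = g x + g y := by
    intro x y; funext m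
    by_cases h : n ≤ m
    · simp only [hg, dif_pos h, Pi.add_apply, mul_add]
    · simp only [hg, dif_neg h, Pi.add_apply, add_zero]
  have hgsmul : ∀ (c : ℂ) (x : ℕ → ℂ), g (c • x) = c • g x := by
    intro c x; funext m
    by_cases h : n ≤ m
    · simp only [hg, dif_pos h, Pi.smul_apply, smul_eq_mul]; ring
    · simp only [hg, dif_neg h, Pi.smul_apply, smul_eq_mul, mul_zero]
  -- linear map
  let L : lp (fun _ : ℕ => ℂ) 2 →ₗ[ℂ] lp (fun _ : ℕ => ℂ) 2 :=
    { toFun := fun x => ⟨g x, hmem x⟩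
      map_add' := fun x y => Subtype.ext (hgadd x y)
      map_smul' := fun c x => Subtype.ext (hgsmul c x) }
  have hLcoe : ∀ (x : lp (fun _ : ℕ => ℂ) 2), (L x : ℕ → ℂ) = g x := fun _ => rfl
  have hbound : ∀ x : lp (fun _ : ℕ => ℂ) 2, ‖L x‖ ≤ C * ‖x‖ := by
    intro x
    refine lp.norm_le_of_tsum_le hp2 (by positivity) ?_
    rw [hLcoe]
    have h1 : (∑' m, ‖g x m‖ ^ ((2 : ENNReal).toReal)) = ∑' k, ‖(w k : ℂ) * (x : ℕ → ℂ) k‖ ^ (2 : ℝ) := by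
      simpa using htsum x
    rw [h1]
    have h2 : (∑' k, ‖(w k : ℂ) * (x : ℕ → ℂ) k‖ ^ (2 : ℝ))
        ≤ ∑' k, C ^ (2:ℝ) * ‖(x : ℕ → ℂ) k‖ ^ (2 : ℝ) := by
      refine Summable.tsum_le_tsum (hsummand_le x) (hsum_wx x) ?_
      exact Summable.mul_left _ (by simpa using (lp.memℓp x).summable hp2)
    have h3 : (∑' k, C ^ (2:ℝ) * ‖(x : ℕ → ℂ) k‖ ^ (2 : ℝ)) = C ^ (2:ℝ) * ‖x‖ ^ (2:ℝ) := by
      rw [tsum_mul_left]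
      congr 1
      have := lp.norm_rpow_eq_tsum hp2 x
      simpa using this.symm
    calc (∑' k, ‖(w k : ℂ) * (x : ℕ → ℂ) k‖ ^ (2 : ℝ)) ≤ C ^ (2:ℝ) * ‖x‖ ^ (2:ℝ) := h2.trans h3.le
      _ = (C * ‖x‖) ^ ((2 : ENNReal).toReal) := by
          rw [← Real.mul_rpow hCpos.le (norm_nonneg _)]
          norm_num
  let T : lp (fun _ : ℕ => ℂ) 2 →L[ℂ] lp (fun _ : ℕ => ℂ) 2 :=
    L.mkContinuous C hbound
  have hTsingle : ∀ k : ℕ, T (lp.single 2 k (1 : ℂ)) =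
      (Real.sqrt (a k / a (n + k)) : ℂ) • lp.single 2 (n + k) (1 : ℂ) := by
    intro k
    apply lp.ext
    funext m
    have hcoe : (T (lp.single 2 k (1 : ℂ)) : ℕ → ℂ) m = g (lp.single 2 k (1:ℂ)) m := rfl
    rw [hcoe]
    rw [lp.coeFn_smul]
    by_cases hm : m = n + k
    · subst hm
      simp [hg, lp.single_apply]
      rfl
    · rw [Pi.smul_apply, lp.single_apply_ne 2 _ _ hm, smul_zero]
      by_cases h : n ≤ m
      · have : m - n ≠ k := by omega
        simp [hg, h, lp.single_apply_ne 2 _ _ this, Pi.single_apply, this]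
      · simp [hg, h]
  refine ⟨T, hTsingle, ?_⟩
  refine le_antisymm (L.mkContinuous_norm_le hCpos.le hbound) ?_
  have hone : ‖lp.single (E := fun _ : ℕ => ℂ) 2 0 (1 : ℂ)‖ = 1 := by
    have := lp.norm_single (E := fun _ : ℕ => ℂ) (p := 2) (by norm_num) 0 (1:ℂ)
    simpa using this
  have h1 : ‖T (lp.single 2 0 (1 : ℂ))‖ ≤ ‖T‖ := by
    calc ‖T (lp.single 2 0 (1 : ℂ))‖ ≤ ‖T‖ * ‖lp.single (E := fun _ : ℕ => ℂ) 2 0 (1 : ℂ)‖ :=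
          T.le_opNorm _
      _ = ‖T‖ := by rw [hone, mul_one]
  have h2 : ‖T (lp.single 2 0 (1 : ℂ))‖ = C := by
    rw [hTsingle 0, norm_smul]
    have hns : ‖lp.single (E := fun _ : ℕ => ℂ) 2 (n + 0) (1 : ℂ)‖ = 1 := by
      have := lp.norm_single (E := fun _ : ℕ => ℂ) (p := 2) (by norm_num) (n + 0) (1:ℂ)
      simpa using this
    rw [hns, mul_one, Complex.norm_real, Real.norm_eq_abs, abs_of_nonneg (hwnn 0)]
    exact hw0
  linarith [h1, h2]
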